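/- Let a > 0 and b ∈ ℝ, let (a_n)_{n≥1} and (b_n)_{n≥0} be real sequences with a_n > 0, a_n → a/2 and b_n → b, and let (p_n) be the associated orthonormal polynomials. Let x ∈ ℂ with x ∉ [b − a, b + a], and let ξ_1(x) = ((x − b) + √((x − b)² − a²))/a and ξ_2(x) = ((x − b) − √((x − b)² − a²))/a be the two roots of the characteristic equation a z² + 2(b − x) z + a = 0. Then p_n(x) ≠ 0 for all sufficiently large n, and the ratio p_{n+1}(x)/p_n(x) converges to ξ_1(x) or to ξ_2(x). -/

import Mathlib

open Filter Topology Polynomial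


lemma aux_div (M T e S L : ℝ) (hS : S ≠ 0) (hL : L ≠ 0) :
    (M*T + e*S)/(L*S) = (M/L)*(T/S) + e/L := by
  field_simp

lemma aux_div2 (e M L : ℝ) (hL : L ≠ 0) (h : L - M ≠ 0) :
    (e/L)/(1 - M/L) = e/(L-M) := by
  rw [div_eq_div_iff]
  · field_simp
  · have h1 : (1 : ℝ) - M/L = (L - M)/L := by field_simp
    rw [h1]
    intro hc
    exact h (by
      have := div_eq_zero_iff.mp hc
      rcases this with h2 | h2
      · exact h2
      · exact absurd h2 hL)
  · exact h

lemma aux_div3 (e D : ℝ) (hD : D ≠ 0) : e = 2 * e / D * D / 2 := by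
  field_simp

set_option maxHeartbeats 1600000 in
lemma poincare_core (ζ μ : ℂ) (hμ : μ ≠ 0) (hlt : ‖μ‖ < ‖ζ‖)
    (s t : ℕ → ℂ) (hne : ∀ n, s n ≠ 0 ∨ t n ≠ 0)
    (c : ℕ → ℝ) (hc : Tendsto c atTop (nhds 0))
    (hs : ∀ n, ‖s (n+1) - ζ * s n‖ ≤ c n * max ‖s n‖ ‖t n‖)
    (ht : ∀ n, ‖t (n+1) - μ * t n‖ ≤ c n * max ‖s n‖ ‖t n‖) :
    (Tendsto (fun n => t n / s n) atTop (nhds 0) ∧ ∀ᶠ n in atTop, s n ≠ 0) ∨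
    (Tendsto (fun n => s n / t n) atTop (nhds 0) ∧ ∀ᶠ n in atTop, t n ≠ 0) := by
  have hM0 : 0 < ‖μ‖ := norm_pos_iff.mpr hμ
  have hLM : ‖μ‖ < ‖ζ‖ := hlt
  -- basic step estimates
  have hs_low : ∀ n, ‖ζ‖ * ‖s n‖ - c n * max ‖s n‖ ‖t n‖ ≤ ‖s (n+1)‖ := by
    intro n
    have h1 := hs n
    have h2 : ‖ζ * s n‖ - ‖s (n+1)‖ ≤ ‖ζ * s n - s (n+1)‖ := norm_sub_norm_le _ _
    rw [norm_sub_rev, norm_mul] at h2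
    linarith
  have hs_high : ∀ n, ‖s (n+1)‖ ≤ ‖ζ‖ * ‖s n‖ + c n * max ‖s n‖ ‖t n‖ := by
    intro n
    have h1 := hs n
    have h2 : ‖s (n+1)‖ - ‖ζ * s n‖ ≤ ‖s (n+1) - ζ * s n‖ := norm_sub_norm_le _ _
    rw [norm_mul] at h2
    linarith
  have ht_low : ∀ n, ‖μ‖ * ‖t n‖ - c n * max ‖s n‖ ‖t n‖ ≤ ‖t (n+1)‖ := by
    intro n
    have h1 := ht n
    have h2 : ‖μ * t n‖ - ‖t (n+1)‖ ≤ ‖μ * t n - t (n+1)‖ := norm_sub_norm_le _ _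
    rw [norm_sub_rev, norm_mul] at h2
    linarith
  have ht_high : ∀ n, ‖t (n+1)‖ ≤ ‖μ‖ * ‖t n‖ + c n * max ‖s n‖ ‖t n‖ := by
    intro n
    have h1 := ht n
    have h2 : ‖t (n+1)‖ - ‖μ * t n‖ ≤ ‖t (n+1) - μ * t n‖ := norm_sub_norm_le _ _
    rw [norm_mul] at h2
    linarith
  have hcev : ∀ ε : ℝ, 0 < ε → ∃ N, ∀ n ≥ N, c n ≤ ε := by
    intro ε hε
    obtain ⟨N, hN⟩ := Metric.tendsto_atTop.mp hc ε hε
    refine ⟨N, fun n hn => ?_⟩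
    have := hN n hn
    rw [Real.dist_eq, sub_zero] at this
    exact le_of_lt ((abs_lt.mp this).2)
  obtain ⟨ε₀, hε₀def⟩ : ∃ _x, _x = min ((‖ζ‖ - ‖μ‖)/4) (‖μ‖/2) := ⟨_, rfl⟩
  have hε₀pos : 0 < ε₀ := hε₀def ▸ lt_min (by linarith) (by linarith)
  have hε₀1 : ε₀ ≤ (‖ζ‖ - ‖μ‖)/4 := hε₀def ▸ min_le_left _ _
  have hε₀2 : ε₀ ≤ ‖μ‖/2 := hε₀def ▸ min_le_right _ _
  obtain ⟨N₀, hN₀⟩ := hcev ε₀ hε₀pos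
  by_cases hcase : ∃ m, N₀ ≤ m ∧ ‖t m‖ ≤ ‖s m‖
  · -- Case 1: dominance of s, ratio → ζ direction
    obtain ⟨m, hm, hms⟩ := hcase
    left
    -- nonvanishing of s given ‖t n‖ ≤ ‖s n‖
    have hsne : ∀ n, ‖t n‖ ≤ ‖s n‖ → s n ≠ 0 := by
      intro n h hsn
      rcases hne n with h' | h'
      · exact h' hsn
      · apply h'
        rw [hsn, norm_zero] at h
        exact norm_le_zero_iff.mp h
    have key1 : ∀ n, N₀ ≤ n → ‖t n‖ ≤ ‖s n‖ → ‖t (n+1)‖ ≤ ‖s (n+1)‖ := by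
      intro n hn hts
      have hsn := hsne n hts
      have hpos : 0 < ‖s n‖ := norm_pos_iff.mpr hsn
      have hmx : max ‖s n‖ ‖t n‖ = ‖s n‖ := max_eq_left hts
      have hcn := hN₀ n hn
      have h1 := hs_low n
      have h2 := ht_high n
      rw [hmx] at h1 h2
      have h3 : c n * ‖s n‖ ≤ ε₀ * ‖s n‖ :=
        mul_le_mul_of_nonneg_right hcn (le_of_lt hpos)
      have h4 : ‖μ‖ * ‖t n‖ ≤ ‖μ‖ * ‖s n‖ :=
        mul_le_mul_of_nonneg_left hts (le_of_lt hM0)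
      nlinarith
    have inv1 : ∀ n, m ≤ n → ‖t n‖ ≤ ‖s n‖ := by
      intro n hn
      induction n, hn using Nat.le_induction with
      | base => exact hms
      | succ n hn ih => exact key1 n (le_trans hm hn) ih
    have hsne' : ∀ n, m ≤ n → s n ≠ 0 := fun n hn => hsne n (inv1 n hn)
    constructor
    · -- Tendsto (t/s) → 0
      rw [Metric.tendsto_atTop]
      intro η hη
      obtain ⟨ε, hεdef⟩ : ∃ _x, _x = min ε₀ (η * (‖ζ‖ - ε₀ - ‖μ‖)/8) := ⟨_, rfl⟩
      have hLεM : 0 < ‖ζ‖ - ε₀ - ‖μ‖ := by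
        have : ε₀ < ‖ζ‖ - ‖μ‖ := lt_of_le_of_lt hε₀1 (by linarith)
        linarith
      have hεpos : 0 < ε := hεdef ▸ lt_min hε₀pos
        (div_pos (mul_pos hη (by linarith)) (by norm_num))
      have hε1 : ε ≤ ε₀ := hεdef ▸ min_le_left _ _
      have hε2 : ε ≤ η * (‖ζ‖ - ε₀ - ‖μ‖)/8 := hεdef ▸ min_le_right _ _
      obtain ⟨N₁, hN₁⟩ := hcev ε hεpos
      obtain ⟨N₂, hN₂def⟩ : ∃ _x, _x = max N₁ m := ⟨_, rfl⟩
      have hN₂1 : N₁ ≤ N₂ := by rw [hN₂def]; exact le_max_left _ _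
      have hN₂2 : m ≤ N₂ := by rw [hN₂def]; exact le_max_right _ _
      obtain ⟨α, hαdef⟩ : ∃ _x, _x = ‖μ‖ / (‖ζ‖ - ε₀) := ⟨_, rfl⟩
      obtain ⟨β, hβdef⟩ : ∃ _x, _x = ε / (‖ζ‖ - ε₀) := ⟨_, rfl⟩
      have hLε : 0 < ‖ζ‖ - ε₀ := by linarith
      have hα0 : 0 ≤ α := by rw [hαdef]; exact div_nonneg (le_of_lt hM0) (le_of_lt hLε)
      have hα1 : α < 1 := by rw [hαdef]; exact (div_lt_one hLε).mpr (by linarith)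
      have hβ0 : 0 ≤ β := by rw [hβdef]; exact div_nonneg (le_of_lt hεpos) (le_of_lt hLε)
      have h1α : 0 < 1 - α := by linarith
      -- one step contraction for n ≥ N₂
      have step : ∀ n, N₂ ≤ n → ‖t (n+1)‖ / ‖s (n+1)‖ ≤ α * (‖t n‖ / ‖s n‖) + β := by
        intro n hn
        have hnm : m ≤ n := le_trans hN₂2 hn
        have hnN₀ : N₀ ≤ n := le_trans hm hnm
        have hts := inv1 n hnm
        have hsn := hsne' n hnm
        have hpos : 0 < ‖s n‖ := norm_pos_iff.mpr hsn
        have hmx : max ‖s n‖ ‖t n‖ = ‖s n‖ := max_eq_left hts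
        have hcn : c n ≤ ε := hN₁ n (le_trans hN₂1 hn)
        have hcn0 : c n ≤ ε₀ := hN₀ n hnN₀
        have h1 := hs_low n; have h2 := ht_high n
        rw [hmx] at h1 h2
        have hnum : ‖t (n+1)‖ ≤ ‖μ‖ * ‖t n‖ + ε * ‖s n‖ := by nlinarith
        have hden : (‖ζ‖ - ε₀) * ‖s n‖ ≤ ‖s (n+1)‖ := by nlinarith
        have hdpos : 0 < (‖ζ‖ - ε₀) * ‖s n‖ := mul_pos hLε hpos
        have hnum0 : 0 ≤ ‖μ‖ * ‖t n‖ + ε * ‖s n‖ := by positivity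
        calc ‖t (n+1)‖ / ‖s (n+1)‖
            ≤ (‖μ‖ * ‖t n‖ + ε * ‖s n‖) / ((‖ζ‖ - ε₀) * ‖s n‖) :=
              div_le_div₀ hnum0 hnum hdpos hden
          _ = α * (‖t n‖ / ‖s n‖) + β := by
              have hsn' : ‖s n‖ ≠ 0 := ne_of_gt hpos
              have hLε' : ‖ζ‖ - ε₀ ≠ 0 := ne_of_gt hLε
              rw [hαdef, hβdef]
              exact aux_div _ _ _ _ _ hsn' hLε'
      have geo : ∀ k : ℕ, ‖t (N₂+k)‖ / ‖s (N₂+k)‖ ≤ α ^ k + β / (1 - α) := by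
        intro k
        induction k with
        | zero =>
          have hnm : m ≤ N₂ := hN₂2
          have hpos : 0 < ‖s N₂‖ := norm_pos_iff.mpr (hsne' N₂ hnm)
          have := inv1 N₂ hnm
          have h01 : ‖t N₂‖ / ‖s N₂‖ ≤ 1 := (div_le_one hpos).mpr this
          have h02 : 0 ≤ β / (1 - α) := div_nonneg hβ0 (le_of_lt h1α)
          simp only [Nat.add_zero, pow_zero]
          linarith
        | succ k ih =>
          have h1 := step (N₂ + k) (Nat.le_add_right _ _)
          have h2 : α * (‖t (N₂+k)‖ / ‖s (N₂+k)‖) + β ≤ α * (α ^ k + β / (1 - α)) + β :=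
            by nlinarith
          have h3 : α * (α ^ k + β / (1 - α)) + β = α ^ (k+1) + β / (1 - α) := by
            rw [eq_comm, pow_succ]
            field_simp
            ring
          calc ‖t (N₂+(k+1))‖ / ‖s (N₂+(k+1))‖ = ‖t ((N₂+k)+1)‖ / ‖s ((N₂+k)+1)‖ := rfl
            _ ≤ α * (‖t (N₂+k)‖ / ‖s (N₂+k)‖) + β := h1
            _ ≤ α ^ (k+1) + β / (1 - α) := by rw [← h3]; exact h2
      have hβsmall : β / (1 - α) ≤ η / 4 := by
        have : β / (1 - α) = ε / (‖ζ‖ - ε₀ - ‖μ‖) := by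
          have hLε' : ‖ζ‖ - ε₀ ≠ 0 := ne_of_gt hLε
          rw [hβdef, hαdef, aux_div2 _ _ _ hLε' (by linarith)]
        rw [this]
        rw [div_le_iff₀ hLεM]
        calc ε ≤ η * (‖ζ‖ - ε₀ - ‖μ‖)/8 := hε2
          _ ≤ η / 4 * (‖ζ‖ - ε₀ - ‖μ‖) := by nlinarith
      obtain ⟨K, hK⟩ := exists_pow_lt_of_lt_one (by linarith : (0:ℝ) < η/2) hα1
      refine ⟨N₂ + K, fun n hn => ?_⟩
      obtain ⟨k, rfl⟩ := Nat.exists_eq_add_of_le hn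
      have hkK : K ≤ K + k := Nat.le_add_right _ _
      have h1 := geo (K + k)
      have h2 : α ^ (K + k) ≤ α ^ K := pow_le_pow_of_le_one hα0 (le_of_lt hα1) hkK
      have heq : ‖t (N₂ + K + k) / s (N₂ + K + k)‖ = ‖t (N₂+(K+k))‖ / ‖s (N₂+(K+k))‖ := by
        rw [norm_div, Nat.add_assoc]
      rw [dist_zero_right, heq]
      linarith
    · exact eventually_atTop.mpr ⟨m, hsne'⟩
  · -- Case 2: t dominates forever
    push_neg at hcase
    right
    have htne : ∀ n, N₀ ≤ n → t n ≠ 0 := by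
      intro n hn h0
      have := hcase n hn
      rw [h0, norm_zero] at this
      exact absurd this (not_lt.mpr (norm_nonneg _))
    constructor
    · rw [Metric.tendsto_atTop]
      intro η hη
      obtain ⟨ε, hεdef⟩ : ∃ _x, _x = min ε₀ (η * (‖ζ‖ - ‖μ‖)/8) := ⟨_, rfl⟩
      have hεpos : 0 < ε := hεdef ▸ lt_min hε₀pos
        (div_pos (mul_pos hη (by linarith)) (by norm_num))
      have hε1 : ε ≤ ε₀ := hεdef ▸ min_le_left _ _
      have hε2 : ε ≤ η * (‖ζ‖ - ‖μ‖)/8 := hεdef ▸ min_le_right _ _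
      obtain ⟨N₁, hN₁⟩ := hcev ε hεpos
      obtain ⟨τ, hτdef⟩ : ∃ _x, _x = 2 * ε / (‖ζ‖ - ‖μ‖) := ⟨_, rfl⟩
      have hτpos : 0 < τ := by rw [hτdef]; exact div_pos (by linarith) (by linarith)
      have hτη : τ < η := by
        rw [hτdef, div_lt_iff₀ (by linarith : (0:ℝ) < ‖ζ‖ - ‖μ‖)]
        nlinarith
      obtain ⟨N₂, hN₂def⟩ : ∃ _x, _x = max N₁ N₀ := ⟨_, rfl⟩
      have hN₂1 : N₁ ≤ N₂ := by rw [hN₂def]; exact le_max_left _ _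
      have hN₂2 : N₀ ≤ N₂ := by rw [hN₂def]; exact le_max_right _ _
      obtain ⟨γ, hγdef⟩ : ∃ _x, _x = (‖ζ‖ + ‖μ‖) / (2 * (‖μ‖ + ε₀)) := ⟨_, rfl⟩
      have hMε : 0 < ‖μ‖ + ε₀ := by linarith
      have hγ1 : 1 < γ := by
        rw [hγdef, lt_div_iff₀ (by linarith : (0:ℝ) < 2 * (‖μ‖ + ε₀))]
        nlinarith
      -- claim: ∀ n ≥ N₂, σ n < τ
      have claim : ∀ n, N₂ ≤ n → ‖s n‖ / ‖t n‖ < τ := by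
        by_contra hcon
        push_neg at hcon
        obtain ⟨m, hm, hτm⟩ := hcon
        have grow : ∀ n, N₂ ≤ n → τ ≤ ‖s n‖ / ‖t n‖ →
            γ * (‖s n‖ / ‖t n‖) ≤ ‖s (n+1)‖ / ‖t (n+1)‖ := by
          intro n hn hτn
          have hnN₀ : N₀ ≤ n := le_trans hN₂2 hn
          have hst := hcase n hnN₀
          have htn : 0 < ‖t n‖ := lt_of_le_of_lt (norm_nonneg _) hst
          have hmx : max ‖s n‖ ‖t n‖ = ‖t n‖ := max_eq_right (le_of_lt hst)
          have hcn : c n ≤ ε := hN₁ n (le_trans hN₂1 hn)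
          have hcn0 : c n ≤ ε₀ := hN₀ n hnN₀
          have h1 := hs_low n; have h2 := ht_high n
          rw [hmx] at h1 h2
          have hτT : τ * ‖t n‖ ≤ ‖s n‖ := (le_div_iff₀ htn).mp hτn
          have hετ : ε = τ * (‖ζ‖ - ‖μ‖) / 2 := by
            have hLMne : ‖ζ‖ - ‖μ‖ ≠ 0 := by linarith
            rw [hτdef]
            exact aux_div3 _ _ hLMne
          have hεT : ε * ‖t n‖ ≤ (‖ζ‖ - ‖μ‖)/2 * ‖s n‖ := by nlinarith
          have hcT : c n * ‖t n‖ ≤ ε * ‖t n‖ :=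
            mul_le_mul_of_nonneg_right hcn (le_of_lt htn)
          have hA : (‖ζ‖ + ‖μ‖)/2 * ‖s n‖ ≤ ‖s (n+1)‖ := by linarith
          have hB : ‖t (n+1)‖ ≤ (‖μ‖ + ε₀) * ‖t n‖ := by nlinarith
          have htn1 : 0 < ‖t (n+1)‖ :=
            lt_of_le_of_lt (norm_nonneg _) (hcase (n+1) (le_trans hnN₀ (Nat.le_succ n)))
          calc γ * (‖s n‖ / ‖t n‖) = ((‖ζ‖ + ‖μ‖)/2 * ‖s n‖) / ((‖μ‖ + ε₀) * ‖t n‖) := by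
                rw [hγdef]; field_simp
            _ ≤ ‖s (n+1)‖ / ‖t (n+1)‖ := div_le_div₀ (norm_nonneg _) hA htn1 hB
        have escal : ∀ k : ℕ, γ ^ k * τ ≤ ‖s (m+k)‖ / ‖t (m+k)‖ := by
          intro k
          induction k with
          | zero => simpa using hτm
          | succ k ih =>
            have hγk : 1 ≤ γ ^ k := one_le_pow₀ (le_of_lt hγ1)
            have hτk : τ ≤ ‖s (m+k)‖ / ‖t (m+k)‖ := le_trans (by nlinarith) ih
            have hg := grow (m+k) (le_trans hm (Nat.le_add_right _ _)) hτk
            have h2 : γ * (γ ^ k * τ) ≤ γ * (‖s (m+k)‖ / ‖t (m+k)‖) :=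
              mul_le_mul_of_nonneg_left ih (by linarith)
            calc γ ^ (k+1) * τ = γ * (γ ^ k * τ) := by ring
              _ ≤ γ * (‖s (m+k)‖ / ‖t (m+k)‖) := h2
              _ ≤ ‖s ((m+k)+1)‖ / ‖t ((m+k)+1)‖ := hg
              _ = ‖s (m+(k+1))‖ / ‖t (m+(k+1))‖ := rfl
        obtain ⟨K, hK⟩ := pow_unbounded_of_one_lt (1/τ) hγ1
        have hb : ‖s (m+K)‖ / ‖t (m+K)‖ < 1 := by
          have hN : N₀ ≤ m + K := le_trans (le_trans hN₂2 hm) (Nat.le_add_right _ _)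
          have hst := hcase (m+K) hN
          have htp : 0 < ‖t (m+K)‖ := lt_of_le_of_lt (norm_nonneg _) hst
          exact (div_lt_one htp).mpr hst
        have : 1 < γ ^ K * τ := by
          rw [div_lt_iff₀ hτpos] at hK
          linarith
        have := escal K
        linarith
      refine ⟨N₂, fun n hn => ?_⟩
      have h1 := claim n hn
      have hnN₀ : N₀ ≤ n := le_trans hN₂2 hn
      have : ‖s n / t n‖ = ‖s n‖ / ‖t n‖ := norm_div _ _
      rw [dist_zero_right, this]
      linarith
    · exact eventually_atTop.mpr ⟨N₀, htne⟩

set_option maxHeartbeats 1600000 in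
lemma ratio_of_rec (ξ₁ ξ₂ : ℂ) (hprod : ξ₁ * ξ₂ = 1) (hlt : ‖ξ₂‖ < ‖ξ₁‖)
    (u A B : ℕ → ℂ) (hu0 : u 0 ≠ 0)
    (hrec : ∀ n, u (n+2) = A n * u (n+1) + B n * u n)
    (hBne : ∀ n, B n ≠ 0)
    (hA : Tendsto A atTop (nhds (ξ₁ + ξ₂)))
    (hB : Tendsto B atTop (nhds (-1))) :
    (∃ N, ∀ n ≥ N, u n ≠ 0) ∧
      (Tendsto (fun n => u (n+1) / u n) atTop (nhds ξ₁) ∨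
       Tendsto (fun n => u (n+1) / u n) atTop (nhds ξ₂)) := by
  have hξ₂0 : ξ₂ ≠ 0 := by
    intro h; rw [h, mul_zero] at hprod; exact zero_ne_one hprod
  have hDne : ξ₁ - ξ₂ ≠ 0 := by
    intro h
    have : ξ₁ = ξ₂ := by linear_combination h
    rw [this] at hlt; exact lt_irrefl _ hlt
  have hDpos : 0 < ‖ξ₁ - ξ₂‖ := norm_pos_iff.mpr hDne
  -- pairs never vanish
  have hpair : ∀ n, u n ≠ 0 ∨ u (n + 1) ≠ 0 := by
    intro n
    induction n with
    | zero => exact Or.inl hu0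
    | succ n ih =>
      by_cases h1 : u (n + 1) = 0
      · rcases ih with h | h
        · right
          rw [hrec n, h1, mul_zero, zero_add]
          exact mul_ne_zero (hBne n) h
        · exact absurd h1 h
      · exact Or.inl h1
  set s : ℕ → ℂ := fun n => (u (n+1) - ξ₂ * u n)/(ξ₁ - ξ₂) with hsdef
  set t : ℕ → ℂ := fun n => (ξ₁ * u n - u (n+1))/(ξ₁ - ξ₂) with htdef
  have hst1 : ∀ n, s n + t n = u n := by
    intro n
    simp only [hsdef, htdef]
    field_simp
    ring
  have hst2 : ∀ n, ξ₁ * s n + ξ₂ * t n = u (n+1) := by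
    intro n
    simp only [hsdef, htdef]
    field_simp
    ring
  have hne' : ∀ n, s n ≠ 0 ∨ t n ≠ 0 := by
    intro n
    by_contra h
    push_neg at h
    obtain ⟨h1, h2⟩ := h
    have e1 : u n = 0 := by rw [← hst1 n, h1, h2, add_zero]
    have e2 : u (n+1) = 0 := by rw [← hst2 n, h1, h2, mul_zero, mul_zero, add_zero]
    rcases hpair n with h | h
    · exact h e1
    · exact h e2
  set c : ℕ → ℝ :=
    fun n => (‖A n - (ξ₁ + ξ₂)‖ + ‖B n + 1‖) * (‖ξ₁‖ + ‖ξ₂‖ + 2) / ‖ξ₁ - ξ₂‖ with hcdef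
  have hc : Tendsto c atTop (nhds 0) := by
    have h1 : Tendsto (fun n => ‖A n - (ξ₁ + ξ₂)‖) atTop (nhds 0) := by
      have := (hA.sub_const (ξ₁ + ξ₂)).norm
      simpa using this
    have h2 : Tendsto (fun n => ‖B n + 1‖) atTop (nhds 0) := by
      have := (hB.add_const 1).norm
      simpa using this
    have h3 := ((h1.add h2).mul_const ((‖ξ₁‖ + ‖ξ₂‖ + 2))).div_const ‖ξ₁ - ξ₂‖
    simpa using h3
  -- norm bounds for u in terms of s t
  have hU : ∀ n, ‖u n‖ ≤ 2 * max ‖s n‖ ‖t n‖ := by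
    intro n
    rw [← hst1 n]
    calc ‖s n + t n‖ ≤ ‖s n‖ + ‖t n‖ := norm_add_le _ _
      _ ≤ 2 * max ‖s n‖ ‖t n‖ := by
          have := le_max_left ‖s n‖ ‖t n‖
          have := le_max_right ‖s n‖ ‖t n‖
          linarith
  have hV : ∀ n, ‖u (n+1)‖ ≤ (‖ξ₁‖ + ‖ξ₂‖) * max ‖s n‖ ‖t n‖ := by
    intro n
    rw [← hst2 n]
    calc ‖ξ₁ * s n + ξ₂ * t n‖ ≤ ‖ξ₁ * s n‖ + ‖ξ₂ * t n‖ := norm_add_le _ _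
      _ = ‖ξ₁‖ * ‖s n‖ + ‖ξ₂‖ * ‖t n‖ := by rw [norm_mul, norm_mul]
      _ ≤ (‖ξ₁‖ + ‖ξ₂‖) * max ‖s n‖ ‖t n‖ := by
          have h1 := le_max_left ‖s n‖ ‖t n‖
          have h2 := le_max_right ‖s n‖ ‖t n‖
          have h3 : ‖ξ₁‖ * ‖s n‖ ≤ ‖ξ₁‖ * max ‖s n‖ ‖t n‖ :=
            mul_le_mul_of_nonneg_left h1 (norm_nonneg _)
          have h4 : ‖ξ₂‖ * ‖t n‖ ≤ ‖ξ₂‖ * max ‖s n‖ ‖t n‖ :=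
            mul_le_mul_of_nonneg_left h2 (norm_nonneg _)
          nlinarith
  have hbound : ∀ n (w : ℂ), w = (A n - (ξ₁ + ξ₂)) * u (n+1) + (B n + 1) * u n ∨
      w = ((ξ₁ + ξ₂) - A n) * u (n+1) - (B n + 1) * u n →
      ‖w / (ξ₁ - ξ₂)‖ ≤ c n * max ‖s n‖ ‖t n‖ := by
    intro n w hw
    have hwb : ‖w‖ ≤ ‖A n - (ξ₁ + ξ₂)‖ * ‖u (n+1)‖ + ‖B n + 1‖ * ‖u n‖ := by
      rcases hw with hw | hw
      · rw [hw]
        calc ‖(A n - (ξ₁ + ξ₂)) * u (n+1) + (B n + 1) * u n‖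
            ≤ ‖(A n - (ξ₁ + ξ₂)) * u (n+1)‖ + ‖(B n + 1) * u n‖ := norm_add_le _ _
          _ = ‖A n - (ξ₁ + ξ₂)‖ * ‖u (n+1)‖ + ‖B n + 1‖ * ‖u n‖ := by
              rw [norm_mul, norm_mul]
      · rw [hw]
        calc ‖((ξ₁ + ξ₂) - A n) * u (n+1) - (B n + 1) * u n‖
            ≤ ‖((ξ₁ + ξ₂) - A n) * u (n+1)‖ + ‖(B n + 1) * u n‖ := norm_sub_le _ _
          _ = ‖A n - (ξ₁ + ξ₂)‖ * ‖u (n+1)‖ + ‖B n + 1‖ * ‖u n‖ := by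
              rw [norm_mul, norm_mul, norm_sub_rev]
    set P := ‖A n - (ξ₁ + ξ₂)‖ with hP
    set Q := ‖B n + 1‖ with hQ
    set mx := max ‖s n‖ ‖t n‖ with hmx
    have hP0 : 0 ≤ P := norm_nonneg _
    have hQ0 : 0 ≤ Q := norm_nonneg _
    have hmx0 : 0 ≤ mx := le_trans (norm_nonneg _) (le_max_left _ _)
    have h1 : P * ‖u (n+1)‖ ≤ P * ((‖ξ₁‖ + ‖ξ₂‖) * mx) :=
      mul_le_mul_of_nonneg_left (hV n) hP0
    have h2 : Q * ‖u n‖ ≤ Q * (2 * mx) :=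
      mul_le_mul_of_nonneg_left (hU n) hQ0
    have h3 : ‖w‖ ≤ (P + Q) * (‖ξ₁‖ + ‖ξ₂‖ + 2) * mx := by
      have hξn : 0 ≤ ‖ξ₁‖ + ‖ξ₂‖ := by positivity
      nlinarith [mul_nonneg hP0 hmx0, mul_nonneg hQ0 hmx0,
        mul_nonneg (mul_nonneg hQ0 hξn) hmx0, mul_nonneg (mul_nonneg hP0 hξn) hmx0]
    rw [norm_div]
    rw [div_le_iff₀ hDpos]
    have hceq : c n * mx * ‖ξ₁ - ξ₂‖ = (P + Q) * (‖ξ₁‖ + ‖ξ₂‖ + 2) * mx := by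
      simp only [hcdef]
      rw [div_mul_eq_mul_div, div_mul_eq_mul_div, div_eq_iff (ne_of_gt hDpos)]
    rw [hceq]
    exact h3
  have hkey_s : ∀ n, s (n+1) - ξ₁ * s n =
      ((A n - (ξ₁ + ξ₂)) * u (n+1) + (B n + 1) * u n) / (ξ₁ - ξ₂) := by
    intro n
    simp only [hsdef]
    rw [hrec n, ← hprod]
    field_simp
    ring
  have hkey_t : ∀ n, t (n+1) - ξ₂ * t n =
      (((ξ₁ + ξ₂) - A n) * u (n+1) - (B n + 1) * u n) / (ξ₁ - ξ₂) := by
    intro n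
    simp only [htdef]
    rw [hrec n, ← hprod]
    field_simp
    ring
  have hsb : ∀ n, ‖s (n+1) - ξ₁ * s n‖ ≤ c n * max ‖s n‖ ‖t n‖ := by
    intro n
    rw [hkey_s n]
    exact hbound n _ (Or.inl rfl)
  have htb : ∀ n, ‖t (n+1) - ξ₂ * t n‖ ≤ c n * max ‖s n‖ ‖t n‖ := by
    intro n
    rw [hkey_t n]
    exact hbound n _ (Or.inr rfl)
  rcases poincare_core ξ₁ ξ₂ hξ₂0 hlt s t hne' c hc hsb htb with ⟨hr, hsev⟩ | ⟨hr, htev⟩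
  · -- ratio → ξ₁
    have h1r : Tendsto (fun n => 1 + t n / s n) atTop (nhds 1) := by
      have := (tendsto_const_nhds : Tendsto (fun _ : ℕ => (1:ℂ)) atTop (nhds 1)).add hr
      simpa using this
    have h1rne : ∀ᶠ n in atTop, 1 + t n / s n ≠ 0 :=
      h1r.eventually_ne one_ne_zero
    have huev : ∀ᶠ n in atTop, u n ≠ 0 ∧ s n ≠ 0 ∧ 1 + t n / s n ≠ 0 := by
      filter_upwards [hsev, h1rne] with n h1 h2
      refine ⟨?_, h1, h2⟩
      have : u n = s n * (1 + t n / s n) := by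
        rw [← hst1 n]
        field_simp
      rw [this]
      exact mul_ne_zero h1 h2
    constructor
    · obtain ⟨N, hN⟩ := eventually_atTop.mp huev
      exact ⟨N, fun n hn => (hN n hn).1⟩
    · left
      have heq : ∀ᶠ n in atTop,
          (ξ₁ + ξ₂ * (t n / s n)) / (1 + t n / s n) = u (n+1) / u n := by
        filter_upwards [huev] with n ⟨hu, hsn, h1r'⟩
        rw [← hst1 n, ← hst2 n]
        rw [div_eq_div_iff h1r' (by rw [hst1 n]; exact hu)]
        field_simp
      have hlim : Tendsto (fun n => (ξ₁ + ξ₂ * (t n / s n)) / (1 + t n / s n))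
          atTop (nhds ξ₁) := by
        have hnum : Tendsto (fun n => ξ₁ + ξ₂ * (t n / s n)) atTop (nhds ξ₁) := by
          have := (tendsto_const_nhds : Tendsto (fun _ : ℕ => ξ₁) atTop (nhds ξ₁)).add
            ((tendsto_const_nhds : Tendsto (fun _ : ℕ => ξ₂) atTop (nhds ξ₂)).mul hr)
          simpa using this
        have := hnum.div h1r one_ne_zero
        rwa [div_one] at this
      exact hlim.congr' heq
  · -- ratio → ξ₂
    have h1r : Tendsto (fun n => s n / t n + 1) atTop (nhds 1) := by
      have := hr.add (tendsto_const_nhds : Tendsto (fun _ : ℕ => (1:ℂ)) atTop (nhds 1))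
      simpa using this
    have h1rne : ∀ᶠ n in atTop, s n / t n + 1 ≠ 0 :=
      h1r.eventually_ne one_ne_zero
    have huev : ∀ᶠ n in atTop, u n ≠ 0 ∧ t n ≠ 0 ∧ s n / t n + 1 ≠ 0 := by
      filter_upwards [htev, h1rne] with n h1 h2
      refine ⟨?_, h1, h2⟩
      have : u n = t n * (s n / t n + 1) := by
        rw [← hst1 n]
        field_simp
      rw [this]
      exact mul_ne_zero h1 h2
    constructor
    · obtain ⟨N, hN⟩ := eventually_atTop.mp huev
      exact ⟨N, fun n hn => (hN n hn).1⟩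
    · right
      have heq : ∀ᶠ n in atTop,
          (ξ₁ * (s n / t n) + ξ₂) / (s n / t n + 1) = u (n+1) / u n := by
        filter_upwards [huev] with n ⟨hu, htn, h1r'⟩
        rw [← hst1 n, ← hst2 n]
        rw [div_eq_div_iff h1r' (by rw [hst1 n]; exact hu)]
        field_simp
      have hlim : Tendsto (fun n => (ξ₁ * (s n / t n) + ξ₂) / (s n / t n + 1))
          atTop (nhds ξ₂) := by
        have hnum : Tendsto (fun n => ξ₁ * (s n / t n) + ξ₂) atTop (nhds ξ₂) := by
          have := ((tendsto_const_nhds : Tendsto (fun _ : ℕ => ξ₁) atTop (nhds ξ₁)).mul hr).add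
            (tendsto_const_nhds : Tendsto (fun _ : ℕ => ξ₂) atTop (nhds ξ₂))
          simpa using this
        have := hnum.div h1r one_ne_zero
        rwa [div_one] at this
      exact hlim.congr' heq

set_option maxHeartbeats 1600000 in
/-- For orthonormal polynomials in the class `M(a,b)` and `x ∉ [b−a, b+a]`, the
ratio `p_{n+1}(x)/p_n(x)` converges to one of the two roots `ξ₁(x)`, `ξ₂(x)` of
the characteristic equation `a z² + 2(b − x) z + a = 0`. -/
theorem ratio_asymptotics_Mab
    (a b : ℝ) (ha : 0 < a)
    (an bn : ℕ → ℝ) (hapos : ∀ n, 1 ≤ n → 0 < an n)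
    (hlima : Tendsto an atTop (nhds (a / 2))) (hlimb : Tendsto bn atTop (nhds b))
    (p : ℕ → Polynomial ℝ) (hp0 : p 0 = 1)
    (hrec0 : X * p 0 = C (an 1) * p 1 + C (bn 0) * p 0)
    (hrec : ∀ n, X * p (n + 1) =
      C (an (n + 2)) * p (n + 2) + C (bn (n + 1)) * p (n + 1) + C (an (n + 1)) * p n)
    (x : ℂ) (hx : ∀ t : ℝ, t ∈ Set.Icc (b - a) (b + a) → x ≠ (t : ℂ))
    (ξ₁ ξ₂ : ℂ)
    (hξ : ∀ z : ℂ, (a : ℂ) * z ^ 2 + 2 * ((b : ℂ) - x) * z + (a : ℂ) =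
      (a : ℂ) * (z - ξ₁) * (z - ξ₂)) :
    (∃ N : ℕ, ∀ n ≥ N, Polynomial.aeval x (p n) ≠ 0) ∧
      (Tendsto (fun n => Polynomial.aeval x (p (n + 1)) / Polynomial.aeval x (p n))
          atTop (nhds ξ₁) ∨
        Tendsto (fun n => Polynomial.aeval x (p (n + 1)) / Polynomial.aeval x (p n))
          atTop (nhds ξ₂)) := by
  have haC : (a : ℂ) ≠ 0 := Complex.ofReal_ne_zero.mpr (ne_of_gt ha)
  -- algebraic facts about the roots
  have hprod : ξ₁ * ξ₂ = 1 := by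
    have h0 := hξ 0
    have h1 : (a:ℂ) * (ξ₁ * ξ₂) = (a:ℂ) * 1 := by linear_combination -h0
    exact mul_left_cancel₀ haC h1
  have hsum : (a : ℂ) * (ξ₁ + ξ₂) = 2 * (x - (b:ℂ)) := by
    linear_combination hξ 1 - hξ 0
  -- the two roots have distinct moduli
  have hξ₁0 : ξ₁ ≠ 0 := by
    intro h; rw [h, zero_mul] at hprod; exact zero_ne_one hprod
  have hmodne : ‖ξ₁‖ ≠ ‖ξ₂‖ := by
    intro h
    have hnorm : ‖ξ₁‖ * ‖ξ₂‖ = 1 := by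
      rw [← norm_mul, hprod, norm_one]
    have habs1 : ‖ξ₁‖ = 1 := by
      rw [← h] at hnorm
      nlinarith [norm_nonneg ξ₁]
    have habs1' : ‖ξ₁‖ = 1 := habs1
    have hconj : ξ₂ = starRingEnd ℂ ξ₁ := by
      have hsq : ξ₁ * starRingEnd ℂ ξ₁ = 1 := by
        rw [Complex.mul_conj, Complex.normSq_eq_norm_sq, habs1']
        norm_num
      exact mul_left_cancel₀ hξ₁0 (hprod.trans hsq.symm)
    have hre : ξ₁ + ξ₂ = ((2 * ξ₁.re : ℝ) : ℂ) := by
      rw [hconj, Complex.add_conj]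
    have hxval : x = ((b + a * ξ₁.re : ℝ) : ℂ) := by
      rw [hre] at hsum
      push_cast at hsum ⊢
      linear_combination -hsum / 2
    have hrange : |ξ₁.re| ≤ 1 := by
      have := Complex.abs_re_le_norm ξ₁
      rw [habs1'] at this
      exact this
    have hmem : b + a * ξ₁.re ∈ Set.Icc (b - a) (b + a) := by
      constructor
      · nlinarith [(abs_le.mp hrange).1]
      · nlinarith [(abs_le.mp hrange).2]
    exact hx _ hmem hxval
  -- scalar sequences
  set u : ℕ → ℂ := fun n => Polynomial.aeval x (p n) with hudef
  have hu0 : u 0 ≠ 0 := by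
    simp [hudef, hp0]
  set A : ℕ → ℂ := fun n => (x - (bn (n+1) : ℂ)) / (an (n+2) : ℂ) with hAdef
  set B : ℕ → ℂ := fun n => -((an (n+1) : ℂ) / (an (n+2) : ℂ)) with hBdef
  have hanne : ∀ k, 1 ≤ k → ((an k : ℂ)) ≠ 0 :=
    fun k hk => Complex.ofReal_ne_zero.mpr (ne_of_gt (hapos k hk))
  have hBne : ∀ n, B n ≠ 0 := by
    intro n
    simp only [hBdef, neg_ne_zero]
    exact div_ne_zero (hanne (n+1) (by omega)) (hanne (n+2) (by omega))
  have hrecu : ∀ n, u (n+2) = A n * u (n+1) + B n * u n := by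
    intro n
    have h := congrArg (Polynomial.aeval x) (hrec n)
    simp only [map_add, map_mul, aeval_X, aeval_C, Complex.coe_algebraMap] at h
    simp only [hudef, hAdef, hBdef]
    have h2 := hanne (n+2) (by omega)
    field_simp
    linear_combination -h
  -- limits of coefficients
  have ha2 : ((a/2 : ℝ) : ℂ) ≠ 0 := by
    rw [Complex.ofReal_ne_zero]
    positivity
  have hlimaC : Tendsto (fun n => ((an (n+2) : ℝ) : ℂ)) atTop (nhds ((a/2 : ℝ) : ℂ)) :=
    (Complex.continuous_ofReal.tendsto _).comp (hlima.comp (tendsto_add_atTop_nat 2))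
  have hlimbC : Tendsto (fun n => ((bn (n+1) : ℝ) : ℂ)) atTop (nhds ((b : ℝ) : ℂ)) :=
    (Complex.continuous_ofReal.tendsto _).comp (hlimb.comp (tendsto_add_atTop_nat 1))
  have hlima1C : Tendsto (fun n => ((an (n+1) : ℝ) : ℂ)) atTop (nhds ((a/2 : ℝ) : ℂ)) :=
    (Complex.continuous_ofReal.tendsto _).comp (hlima.comp (tendsto_add_atTop_nat 1))
  have hA : Tendsto A atTop (nhds (ξ₁ + ξ₂)) := by
    have hnum : Tendsto (fun n => x - ((bn (n+1) : ℝ) : ℂ)) atTop (nhds (x - (b:ℂ))) :=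
      tendsto_const_nhds.sub hlimbC
    have := hnum.div hlimaC ha2
    have heq : (x - (b:ℂ)) / ((a/2 : ℝ) : ℂ) = ξ₁ + ξ₂ := by
      push_cast
      rw [div_eq_iff (by
        intro hc
        apply haC
        have : (a:ℂ) = 2 * ((a:ℂ)/2) := by ring
        rw [this, hc, mul_zero])]
      linear_combination -hsum / 2
    rw [heq] at this
    exact this
  have hB : Tendsto B atTop (nhds (-1)) := by
    have := (hlima1C.div hlimaC ha2).neg
    have heq : -(((a/2 : ℝ) : ℂ) / ((a/2 : ℝ) : ℂ)) = (-1 : ℂ) := by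
      rw [div_self ha2]
    rw [heq] at this
    exact this
  -- apply the main dichotomy lemma, in the right order of roots
  rcases lt_or_gt_of_ne hmodne with hlt | hlt
  · have hprod' : ξ₂ * ξ₁ = 1 := by rw [mul_comm]; exact hprod
    have hA' : Tendsto A atTop (nhds (ξ₂ + ξ₁)) := by rw [add_comm]; exact hA
    obtain ⟨hN, hor⟩ := ratio_of_rec ξ₂ ξ₁ hprod' hlt u A B hu0 hrecu hBne hA' hB
    exact ⟨hN, hor.symm⟩
  · exact ratio_of_rec ξ₁ ξ₂ hprod hlt u A B hu0 hrecu hBne hA hB
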